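/- For n ≥ 3, the statement G_n ∈ ℤ[x₁,x₂] is equivalent to: for all nonnegative integers u, v, w with 1 ≤ w ≤ n/2 and u+v = 2w−1, the rational number j_n · C(n−1,u) · C(n−1,v) · ( (B_{2n}/(2n))(B_{2w}/(2w) + B_{2n−2w}/(2n−2w)) − (B_{2w}/(2w))(B_{2n−2w}/(2n−2w)) ) + δ_{w,1}/2 is an integer. -/

import Mathlib

open Finset

/-- β_m := (-1)^m B_{m+1}/(m+1), with B₁ = -1/2. -/
noncomputable def beta (m : ℕ) : ℚ := (-1 : ℚ)^m * bernoulli (m+1) / (m+1)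

/-- ξ_r, with ξ_0 = ξ_{2n-2} = 0. -/
noncomputable def xi (n r : ℕ) : ℚ :=
  if r = 0 ∨ r = 2*n-2 then 0
  else beta (2*n-1) * (beta r + beta (2*n-2-r)
        + ((if r = 1 then 1 else 0) + (if 2*n-2-r = 1 then 1 else 0)) / (2*(n : ℚ) - 2))
      - beta r * beta (2*n-2-r)

/-- Q_r as a polynomial in two variables: the coefficient of z^r in ((z-x₁)(z-x₂))^{n-1}. -/
noncomputable def Qpoly (n r : ℕ) : MvPolynomial (Fin 2) ℚ :=
  Polynomial.coeff
    ((((Polynomial.X - Polynomial.C (MvPolynomial.X 0))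
        * (Polynomial.X - Polynomial.C (MvPolynomial.X 1)))
        : Polynomial (MvPolynomial (Fin 2) ℚ))^(n-1)) r

/-- j_n : the denominator of B_{2n}/(2n) in lowest terms. -/
noncomputable def jden (n : ℕ) : ℕ := (bernoulli (2*n) / (2*n) : ℚ).den

/-- G_n(x₁,x₂) := j_n Σ_r ξ_r Q_r(x₁,x₂). -/
noncomputable def Gpoly (n : ℕ) : MvPolynomial (Fin 2) ℚ :=
  (jden n : ℚ) • ∑ r ∈ range (2*n-1), xi n r • Qpoly n r



lemma sum_choose_e (M : ℕ) (hM : 2 ≤ M) (hME : Even M) :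
    ∑ k ∈ range M, ((M+1).choose k : ℤ) * (if k ≠ 0 ∧ (k = 1 ∨ Even k) then 1 else 0)
      = 2^M - 1 := by
  have h2 : (2:ℤ) ≠ 0 := by norm_num
  apply mul_left_cancel₀ h2
  rw [Finset.mul_sum]
  have hpt : ∀ k ∈ range M,
      2 * (((M+1).choose k : ℤ) * (if k ≠ 0 ∧ (k = 1 ∨ Even k) then 1 else 0))
        = ((M+1).choose k : ℤ) * (1 + (-1)^k)
          - 2 * (if k = 0 then ((M+1).choose k : ℤ) else 0)
          + 2 * (if k = 1 then ((M+1).choose k : ℤ) else 0) := by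
    intro k _
    rcases Nat.even_or_odd k with he | ho
    · rcases eq_or_ne k 0 with rfl | h0
      · simp
      · rw [he.neg_one_pow]
        have h1 : k ≠ 1 := by rintro rfl; exact (Nat.not_even_iff_odd.2 (by norm_num)) he
        simp [h0, h1, he]; ring
    · rw [ho.neg_one_pow]
      rcases eq_or_ne k 1 with rfl | h1
      · norm_num
      · have h0 : k ≠ 0 := by rintro rfl; exact (Nat.not_odd_iff_even.2 (by norm_num)) ho
        simp [h0, h1, Nat.not_even_iff_odd.2 ho]
  rw [Finset.sum_congr rfl hpt]
  rw [Finset.sum_add_distrib, Finset.sum_sub_distrib]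
  have e0 : ∑ k ∈ range M, (2 * (if k = 0 then ((M+1).choose k : ℤ) else 0))
      = 2 := by
    rw [← Finset.mul_sum, Finset.sum_ite_eq' (range M) 0 (fun k => ((M+1).choose k : ℤ))]
    simp [Finset.mem_range, (by omega : 0 < M)]
  have e1 : ∑ k ∈ range M, (2 * (if k = 1 then ((M+1).choose k : ℤ) else 0))
      = 2 * (M + 1) := by
    rw [← Finset.mul_sum, Finset.sum_ite_eq' (range M) 1 (fun k => ((M+1).choose k : ℤ))]
    simp [Finset.mem_range, (by omega : 1 < M)]
  rw [e0, e1]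
  have emain : ∑ k ∈ range M, ((M+1).choose k : ℤ) * (1 + (-1)^k)
      = 2^(M+1) - 2*(M+1) := by
    have hext : ∑ k ∈ range (M+2), ((M+1).choose k : ℤ) * (1 + (-1)^k)
        = (∑ k ∈ range M, ((M+1).choose k : ℤ) * (1 + (-1)^k)) + 2*(M+1) := by
      rw [Finset.sum_range_succ, Finset.sum_range_succ]
      have hm : (-1 : ℤ)^M = 1 := hME.neg_one_pow
      have hm1 : (-1 : ℤ)^(M+1) = -1 := by rw [pow_succ, hm]; ring
      rw [hm, hm1]
      simp [Nat.choose_succ_self_right]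
      ring
    have hsum : ∑ k ∈ range (M+2), ((M+1).choose k : ℤ) * (1 + (-1)^k)
        = 2^(M+1) := by
      have := Nat.sum_range_choose (M+1)
      have halt := @Int.alternating_sum_range_choose (M+1)
      rw [if_neg (by omega : M + 1 ≠ 0)] at halt
      have hcast : ∑ k ∈ range (M+2), ((M+1).choose k : ℤ) = 2^(M+1) := by
        exact_mod_cast congrArg (Nat.cast : ℕ → ℤ) this
      calc ∑ k ∈ range (M+2), ((M+1).choose k : ℤ) * (1 + (-1)^k)
          = (∑ k ∈ range (M+2), ((M+1).choose k : ℤ))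
            + ∑ k ∈ range (M+2), (-1)^k * ((M+1).choose k : ℤ) := by
            rw [← Finset.sum_add_distrib]; congr 1; ext k; ring
        _ = 2^(M+1) := by rw [hcast, halt]; ring
    omega
  rw [emain]
  push_cast
  ring


lemma bern2 (M : ℕ) : ∃ x : ℤ_[2], (x : ℚ_[2]) = ((2 * bernoulli M : ℚ) : ℚ_[2]) ∧
    PadicInt.toZMod x = (if M ≠ 0 ∧ (M = 1 ∨ Even M) then 1 else 0) := by
  induction M using Nat.strong_induction_on with
  | _ M IH =>
  rcases eq_or_ne M 0 with rfl | h0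
  · refine ⟨2, ?_, ?_⟩
    · push_cast [bernoulli_zero]; norm_num; norm_cast
    · simp only [if_neg (by simp : ¬((0:ℕ) ≠ 0 ∧ ((0:ℕ) = 1 ∨ Even 0)))]
      rw [show (2 : ℤ_[2]) = ((2:ℕ) : ℤ_[2]) by norm_num, map_natCast]
      decide
  rcases eq_or_ne M 1 with rfl | h1
  · refine ⟨-1, ?_, ?_⟩
    · push_cast [bernoulli_one]; norm_num
    · rw [if_pos (by simp)]
      rw [map_neg, map_one]
      decide
  rcases Nat.even_or_odd M with hME | hMO
  swap
  · -- M odd ≥ 3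
    refine ⟨0, ?_, ?_⟩
    · rw [bernoulli_eq_bernoulli'_of_ne_one h1,
        bernoulli'_eq_zero_of_odd hMO (by omega)]
      push_cast; norm_num
    · rw [if_neg]
      · simp
      · rintro ⟨-, h | h⟩
        · exact h1 h
        · exact (Nat.not_even_iff_odd.2 hMO) h
  -- M even ≥ 2
  have hM2 : 2 ≤ M := by
    rcases hME with ⟨t, ht⟩; omega
  -- recursion in ℚ
  have hrec : ((M:ℚ)+1) * (2 * bernoulli M)
      = - ∑ k ∈ range M, ((M+1).choose k : ℚ) * (2 * bernoulli k) := by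
    have h := sum_bernoulli (M+1)
    rw [if_neg (by omega), Finset.sum_range_succ, Nat.choose_succ_self_right] at h
    have h2 : ∑ k ∈ range M, ((M+1).choose k : ℚ) * (2 * bernoulli k)
        = 2 * ∑ k ∈ range M, ((M+1).choose k : ℚ) * bernoulli k := by
      rw [Finset.mul_sum]; apply Finset.sum_congr rfl; intro k _; ring
    rw [h2]
    push_cast at h ⊢
    linarith
  -- cast to ℚ_[2]
  have hrecP : (((M+1:ℕ)) : ℚ_[2]) * ((2 * bernoulli M : ℚ) : ℚ_[2])
      = - ∑ k ∈ range M, (((M+1).choose k : ℕ) : ℚ_[2]) * ((2 * bernoulli k : ℚ) : ℚ_[2]) := by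
    have hc := congrArg (fun q : ℚ => (q : ℚ_[2])) hrec
    push_cast at hc ⊢
    convert hc using 2
  choose xs hxs1 hxs2 using IH
  set X : ℕ → ℤ_[2] := fun k => if h : k < M then xs k h else 0 with hX
  set y : ℤ_[2] := ∑ k ∈ range M, (((M+1).choose k : ℕ) : ℤ_[2]) * X k with hy
  have hycoe : ((y : ℤ_[2]) : ℚ_[2])
      = ∑ k ∈ range M, (((M+1).choose k : ℕ) : ℚ_[2]) * ((2 * bernoulli k : ℚ) : ℚ_[2]) := by
    have hms : ((∑ k ∈ range M, (((M+1).choose k : ℕ) : ℤ_[2]) * X k : ℤ_[2]) : ℚ_[2])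
        = ∑ k ∈ range M, (((((M+1).choose k : ℕ) : ℤ_[2]) * X k : ℤ_[2]) : ℚ_[2]) :=
      map_sum PadicInt.Coe.ringHom _ (range M)
    rw [hy, hms]
    apply Finset.sum_congr rfl
    intro k hk
    rw [Finset.mem_range] at hk
    rw [PadicInt.coe_mul]
    simp only [hX, dif_pos hk]
    rw [hxs1 k hk]
    push_cast
    ring
  have hM1odd : ¬ ((2:ℤ) ∣ (M+1 : ℤ)) := by
    rcases hME with ⟨t, ht⟩
    omega
  have hunit : IsUnit (((M+1:ℕ)) : ℤ_[2]) := by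
    rw [PadicInt.isUnit_iff]
    have hle := PadicInt.norm_le_one (((M+1:ℕ)) : ℤ_[2])
    rcases lt_or_eq_of_le hle with hlt | heq
    · exfalso
      rw [show ((((M+1:ℕ))) : ℤ_[2]) = (((M+1 : ℕ) : ℤ) : ℤ_[2]) by push_cast; ring] at hlt
      rw [PadicInt.norm_int_lt_one_iff_dvd] at hlt
      exact hM1odd (by exact_mod_cast hlt)
    · exact heq
  obtain ⟨u, hu⟩ := hunit
  refine ⟨↑u⁻¹ * (-y), ?_, ?_⟩
  · have hinv : ((↑(u⁻¹) : ℤ_[2]) : ℚ_[2]) * (((M+1:ℕ)) : ℚ_[2]) = 1 := by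
      have h1 : ((↑(u⁻¹) * ↑u : ℤ_[2]) : ℚ_[2]) = 1 := by
        rw [u.inv_mul]; norm_cast
      rw [PadicInt.coe_mul] at h1
      rw [← h1]
      congr 1
      rw [hu]
      push_cast
      ring
    have hMne : (((M+1:ℕ)) : ℚ_[2]) ≠ 0 := Nat.cast_ne_zero.2 (by omega)
    have hinv2 : ((↑(u⁻¹) : ℤ_[2]) : ℚ_[2]) = ((((M+1:ℕ)) : ℚ_[2]))⁻¹ :=
      eq_inv_of_mul_eq_one_left hinv
    have hxcoe : ((↑(u⁻¹) * (-y) : ℤ_[2]) : ℚ_[2])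
        = ((↑(u⁻¹) : ℤ_[2]) : ℚ_[2]) * (-((y : ℤ_[2]) : ℚ_[2])) := by
      push_cast
      ring
    rw [hxcoe, hinv2, hycoe, ← hrecP, inv_mul_cancel_left₀ hMne]
  · -- toZMod computation
    have htu : PadicInt.toZMod ((u : ℤ_[2])) = 1 := by
      rw [hu, map_natCast]
      obtain ⟨t, ht⟩ := hME
      subst ht
      push_cast
      have h2 : (2 : ZMod 2) = 0 := rfl
      have : ((t : ZMod 2) + t + 1) = 2 * t + 1 := by ring
      rw [this, h2]
      ring
    have htuinv : PadicInt.toZMod ((↑(u⁻¹) : ℤ_[2])) = 1 := by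
      have h1 : PadicInt.toZMod ((↑(u⁻¹) : ℤ_[2])) * PadicInt.toZMod ((u : ℤ_[2])) = 1 := by
        rw [← map_mul, u.inv_mul, map_one]
      rw [htu, mul_one] at h1
      exact h1
    have hty : PadicInt.toZMod y
        = ∑ k ∈ range M, (((M+1).choose k : ℕ) : ZMod 2)
            * (if k ≠ 0 ∧ (k = 1 ∨ Even k) then 1 else 0) := by
      rw [hy, map_sum]
      apply Finset.sum_congr rfl
      intro k hk
      rw [Finset.mem_range] at hk
      rw [map_mul, map_natCast, hX]
      simp only [dif_pos hk]
      rw [hxs2 k hk]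
    have hsum : (∑ k ∈ range M, (((M+1).choose k : ℕ) : ZMod 2)
        * (if k ≠ 0 ∧ (k = 1 ∨ Even k) then 1 else 0)) = 1 := by
      have hZ := sum_choose_e M hM2 hME
      calc (∑ k ∈ range M, (((M+1).choose k : ℕ) : ZMod 2)
          * (if k ≠ 0 ∧ (k = 1 ∨ Even k) then 1 else 0))
          = ∑ k ∈ range M, ((((M+1).choose k : ℤ)
              * (if k ≠ 0 ∧ (k = 1 ∨ Even k) then (1:ℤ) else 0) : ℤ) : ZMod 2) := by
            apply Finset.sum_congr rfl
            intro k _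
            push_cast
            split <;> simp
        _ = ((∑ k ∈ range M, ((M+1).choose k : ℤ)
              * (if k ≠ 0 ∧ (k = 1 ∨ Even k) then (1:ℤ) else 0) : ℤ) : ZMod 2) := by
            push_cast
            rfl
        _ = 1 := by
            rw [hZ]
            push_cast
            rw [show ((2:ZMod 2)) = 0 from rfl]
            rw [zero_pow (by omega : M ≠ 0)]
            decide
    rw [map_mul, map_neg, htuinv, hty, hsum, if_pos ⟨h0, Or.inr hME⟩]
    decide

lemma norm_bern (n : ℕ) (hn : 1 ≤ n) :
    ‖((bernoulli (2*n) : ℚ) : ℚ_[2])‖ = 2 := by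
  obtain ⟨x, hx1, hx2⟩ := bern2 (2*n)
  rw [if_pos ⟨by omega, Or.inr ⟨n, by ring⟩⟩] at hx2
  have hxu : ‖x‖ = 1 := by
    by_contra h
    have hlt : ‖x‖ < 1 := lt_of_le_of_ne (PadicInt.norm_le_one x) h
    have hmem : x ∈ IsLocalRing.maximalIdeal ℤ_[2] := by
      rw [IsLocalRing.mem_maximalIdeal, PadicInt.mem_nonunits]
      exact hlt
    rw [← PadicInt.ker_toZMod, RingHom.mem_ker] at hmem
    rw [hmem] at hx2
    exact absurd hx2 (by decide)
  have h2 : ‖((2 * bernoulli (2*n) : ℚ) : ℚ_[2])‖ = 1 := by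
    rw [← hx1]; exact hxu
  have hsplit : ((2 * bernoulli (2*n) : ℚ) : ℚ_[2])
      = (2 : ℚ_[2]) * ((bernoulli (2*n) : ℚ) : ℚ_[2]) := by push_cast; ring
  rw [hsplit, norm_mul] at h2
  have hn2 : ‖(2 : ℚ_[2])‖ = 2⁻¹ := by
    have := @Padic.norm_p 2 ⟨Nat.prime_two⟩
    simpa using this
  rw [hn2] at h2
  linarith

lemma num_odd (n : ℕ) (hn : 1 ≤ n) :
    Odd (bernoulli (2*n) / (2*n) : ℚ).num := by
  set q : ℚ := bernoulli (2*n) / (2*n) with hq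
  have hben : ‖((bernoulli (2*n) : ℚ) : ℚ_[2])‖ = 2 := norm_bern n hn
  have hbne : (bernoulli (2*n) : ℚ) ≠ 0 := by
    intro h
    rw [h] at hben
    simp at hben
  have h2n : ((2*n : ℕ) : ℚ) ≠ 0 := Nat.cast_ne_zero.2 (by omega)
  -- norm of (2n) cast
  have h2nn : ‖(((2*n : ℕ) : ℚ) : ℚ_[2])‖ ≤ 2⁻¹ := by
    have : (((2*n : ℕ) : ℚ) : ℚ_[2]) = (2 : ℚ_[2]) * ((n:ℚ) : ℚ_[2]) := by push_cast; ring
    rw [this, norm_mul]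
    have hn2 : ‖(2 : ℚ_[2])‖ = 2⁻¹ := by
      have := @Padic.norm_p 2 ⟨Nat.prime_two⟩
      simpa using this
    have hnle : ‖((n:ℚ) : ℚ_[2])‖ ≤ 1 := by
      have := @Padic.norm_int_le_one 2 ⟨Nat.prime_two⟩ (n : ℤ)
      push_cast at this ⊢
      exact this
    rw [hn2]
    nlinarith [norm_nonneg (((n:ℚ) : ℚ_[2]))]
  have h2nne : (((2*n : ℕ) : ℚ) : ℚ_[2]) ≠ 0 := Rat.cast_ne_zero.2 h2n
  have hqnorm : 4 ≤ ‖((q : ℚ) : ℚ_[2])‖ := by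
    have hcast : ((q : ℚ) : ℚ_[2])
        = ((bernoulli (2*n) : ℚ) : ℚ_[2]) / (((2*n : ℕ) : ℚ) : ℚ_[2]) := by
      rw [hq]; push_cast; ring
    rw [hcast, norm_div, hben]
    have hpos : 0 < ‖(((2*n : ℕ) : ℚ) : ℚ_[2])‖ := norm_pos_iff.2 h2nne
    rw [le_div_iff₀ hpos]
    nlinarith
  -- den must be even
  have hden : 2 ∣ q.den := by
    by_contra hodd
    have hdenne : ((q.den : ℤ) : ℚ_[2]) ≠ 0 :=
      Int.cast_ne_zero.2 (Int.natCast_ne_zero.2 q.den_nz)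
    have hdnorm : ‖((q.den : ℤ) : ℚ_[2])‖ = 1 := by
      have hle := @Padic.norm_int_le_one 2 ⟨Nat.prime_two⟩ (q.den : ℤ)
      rcases lt_or_eq_of_le hle with hlt | heq
      · rw [Padic.norm_intCast_lt_one_iff] at hlt
        exact absurd (by exact_mod_cast hlt) hodd
      · exact heq
    have hnumq : (q.num : ℚ) = q * (q.den : ℚ) := by
      have hd : (q.den : ℚ) ≠ 0 := Nat.cast_ne_zero.2 q.den_nz
      exact (Rat.mul_den_eq_num q).symm
    have hnum : ((q.num : ℚ) : ℚ_[2]) = ((q:ℚ) : ℚ_[2]) * ((q.den : ℤ) : ℚ_[2]) := by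
      have := congrArg (fun x : ℚ => (x : ℚ_[2])) hnumq
      push_cast at this ⊢
      exact this
    have hnle : ‖((q.num : ℚ) : ℚ_[2])‖ ≤ 1 := by
      have := @Padic.norm_int_le_one 2 ⟨Nat.prime_two⟩ q.num
      push_cast at this ⊢
      exact this
    rw [hnum, norm_mul, hdnorm, mul_one] at hnle
    linarith
  -- num odd from coprimality
  rw [Int.odd_iff]
  by_contra h
  have h2num : (2:ℤ) ∣ q.num := by omega
  have hcop := q.reduced
  have : (2:ℕ) ∣ Nat.gcd q.num.natAbs q.den := Nat.dvd_gcd (by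
    have := Int.natAbs_dvd_natAbs.2 h2num
    simpa using this) hden
  rw [hcop] at this
  omega

lemma Qpoly_eq (n r : ℕ) :
    Qpoly n r = ∑ ij ∈ antidiagonal r,
      ((-(MvPolynomial.X 0 : MvPolynomial (Fin 2) ℚ))^(n-1-ij.1) * ((n-1).choose ij.1 : MvPolynomial (Fin 2) ℚ))
        * ((-(MvPolynomial.X 1 : MvPolynomial (Fin 2) ℚ))^(n-1-ij.2) * ((n-1).choose ij.2 : MvPolynomial (Fin 2) ℚ)) := by
  rw [Qpoly, mul_pow, Polynomial.coeff_mul]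
  apply Finset.sum_congr rfl
  intro ij _
  congr 1
  · rw [sub_eq_add_neg, ← Polynomial.C_neg, Polynomial.coeff_X_add_C_pow]
  · rw [sub_eq_add_neg, ← Polynomial.C_neg, Polynomial.coeff_X_add_C_pow]

lemma single_eq_iff (a b : ℕ) (d : Fin 2 →₀ ℕ) :
    Finsupp.single (0 : Fin 2) a + Finsupp.single (1 : Fin 2) b = d ↔ a = d 0 ∧ b = d 1 := by
  constructor
  · rintro rfl
    constructor <;> simp [Finsupp.single_apply]
  · rintro ⟨h0, h1⟩
    ext x
    fin_cases x <;> simp [Finsupp.single_apply, ← h0, ← h1]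

lemma neg_X_pow (i : Fin 2) (a : ℕ) :
    (-(MvPolynomial.X i : MvPolynomial (Fin 2) ℚ))^a
      = MvPolynomial.monomial (Finsupp.single i a) ((-1:ℚ)^a) := by
  rw [neg_pow, MvPolynomial.X_pow_eq_monomial]
  rw [show ((-1 : MvPolynomial (Fin 2) ℚ)) = MvPolynomial.C (-1 : ℚ) by simp]
  rw [← map_pow, MvPolynomial.C_mul_monomial, mul_one]

lemma Qpoly_coeff (n : ℕ) (hn : 1 ≤ n) (r : ℕ) (d : Fin 2 →₀ ℕ) :
    (Qpoly n r).coeff d =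
      if d 0 ≤ n-1 ∧ d 1 ≤ n-1 ∧ (n-1-d 0) + (n-1-d 1) = r then
        (-1 : ℚ)^(d 0 + d 1) * ((n-1).choose (d 0) : ℚ) * ((n-1).choose (d 1) : ℚ)
      else 0 := by
  rw [Qpoly_eq, MvPolynomial.coeff_sum]
  have hterm : ∀ ij : ℕ × ℕ,
      MvPolynomial.coeff d
        ((-(MvPolynomial.X 0 : MvPolynomial (Fin 2) ℚ))^(n-1-ij.1) * ((n-1).choose ij.1 : MvPolynomial (Fin 2) ℚ)
        * ((-(MvPolynomial.X 1 : MvPolynomial (Fin 2) ℚ))^(n-1-ij.2) * ((n-1).choose ij.2 : MvPolynomial (Fin 2) ℚ)))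
      = ((-1:ℚ)^((n-1-ij.1) + (n-1-ij.2)) * ((n-1).choose ij.1 : ℚ) * ((n-1).choose ij.2 : ℚ))
          * (if n-1-ij.1 = d 0 ∧ n-1-ij.2 = d 1 then 1 else 0) := by
    intro ij
    have hc1 : (((n-1).choose ij.1 : MvPolynomial (Fin 2) ℚ)) = MvPolynomial.C (((n-1).choose ij.1 : ℚ)) := by
      push_cast; rfl
    have hc2 : (((n-1).choose ij.2 : MvPolynomial (Fin 2) ℚ)) = MvPolynomial.C (((n-1).choose ij.2 : ℚ)) := by
      push_cast; rfl
    have hx : ((-(MvPolynomial.X 0 : MvPolynomial (Fin 2) ℚ))^(n-1-ij.1) * ((n-1).choose ij.1 : MvPolynomial (Fin 2) ℚ)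
        * ((-(MvPolynomial.X 1 : MvPolynomial (Fin 2) ℚ))^(n-1-ij.2) * ((n-1).choose ij.2 : MvPolynomial (Fin 2) ℚ)))
        = MvPolynomial.monomial (Finsupp.single (0:Fin 2) (n-1-ij.1) + Finsupp.single (1:Fin 2) (n-1-ij.2))
            ((-1:ℚ)^((n-1-ij.1) + (n-1-ij.2)) * ((n-1).choose ij.1 : ℚ) * ((n-1).choose ij.2 : ℚ)) := by
      rw [hc1, hc2, neg_X_pow, neg_X_pow, MvPolynomial.C_apply, MvPolynomial.C_apply,
        MvPolynomial.monomial_mul, MvPolynomial.monomial_mul, MvPolynomial.monomial_mul]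
      congr 1
      · simp
      · rw [pow_add]; ring
    rw [hx, MvPolynomial.coeff_monomial]
    by_cases hcond : (n-1-ij.1 = d 0 ∧ n-1-ij.2 = d 1)
    · rw [if_pos ((single_eq_iff _ _ d).2 hcond), if_pos hcond]; ring
    · rw [if_neg (fun h => hcond ((single_eq_iff _ _ d).1 h)), if_neg hcond]; ring
  rw [Finset.sum_congr rfl (fun ij _ => hterm ij)]
  by_cases hmain : d 0 ≤ n-1 ∧ d 1 ≤ n-1 ∧ (n-1-d 0) + (n-1-d 1) = r
  · rw [if_pos hmain]
    obtain ⟨h0, h1, hr⟩ := hmain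
    rw [Finset.sum_eq_single ((n-1-d 0, n-1-d 1) : ℕ × ℕ)]
    · have e1 : n-1-(n-1-d 0) = d 0 := by omega
      have e2 : n-1-(n-1-d 1) = d 1 := by omega
      rw [show ((n-1-d 0, n-1-d 1) : ℕ × ℕ).1 = n-1-d 0 from rfl,
        show ((n-1-d 0, n-1-d 1) : ℕ × ℕ).2 = n-1-d 1 from rfl, e1, e2]
      rw [if_pos ⟨rfl, rfl⟩, Nat.choose_symm h0, Nat.choose_symm h1, mul_one]
    · intro b hb hne
      rw [Finset.HasAntidiagonal.mem_antidiagonal] at hb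
      by_cases hind : (n-1-b.1 = d 0 ∧ n-1-b.2 = d 1)
      · by_cases hb1 : b.1 ≤ n-1 ∧ b.2 ≤ n-1
        · exfalso
          apply hne
          have : b.1 = n-1-d 0 := by omega
          have : b.2 = n-1-d 1 := by omega
          ext <;> simp <;> omega
        · push_neg at hb1
          by_cases hc : b.1 ≤ n-1
          · rw [Nat.choose_eq_zero_of_lt (show n-1 < b.2 by omega)]
            push_cast; ring
          · rw [Nat.choose_eq_zero_of_lt (show n-1 < b.1 by omega)]
            push_cast; ring
      · rw [if_neg hind, mul_zero]
    · intro hnm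
      exfalso
      exact hnm (Finset.HasAntidiagonal.mem_antidiagonal.2 hr)
  · rw [if_neg hmain]
    apply Finset.sum_eq_zero
    intro b hb
    rw [Finset.HasAntidiagonal.mem_antidiagonal] at hb
    by_cases hind : (n-1-b.1 = d 0 ∧ n-1-b.2 = d 1)
    · by_cases hb1 : b.1 ≤ n-1 ∧ b.2 ≤ n-1
      · exfalso
        exact hmain ⟨by omega, by omega, by omega⟩
      · push_neg at hb1
        by_cases hc : b.1 ≤ n-1
        · rw [Nat.choose_eq_zero_of_lt (show n-1 < b.2 by omega)]
          push_cast; ring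
        · rw [Nat.choose_eq_zero_of_lt (show n-1 < b.1 by omega)]
          push_cast; ring
    · rw [if_neg hind, mul_zero]

lemma Gpoly_coeff (n : ℕ) (hn : 3 ≤ n) (d : Fin 2 →₀ ℕ) :
    (Gpoly n).coeff d =
      if d 0 ≤ n-1 ∧ d 1 ≤ n-1 then
        (jden n : ℚ) * xi n ((n-1-d 0) + (n-1-d 1)) * (-1 : ℚ)^(d 0 + d 1)
          * ((n-1).choose (d 0) : ℚ) * ((n-1).choose (d 1) : ℚ)
      else 0 := by
  rw [Gpoly, MvPolynomial.coeff_smul, MvPolynomial.coeff_sum]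
  have hterm : ∀ r, MvPolynomial.coeff d (xi n r • Qpoly n r)
      = xi n r * (Qpoly n r).coeff d := fun r => MvPolynomial.coeff_smul d (xi n r) (Qpoly n r)
  simp only [hterm, Qpoly_coeff n (by omega) _ d]
  by_cases hd : d 0 ≤ n-1 ∧ d 1 ≤ n-1
  · rw [if_pos hd]
    rw [Finset.sum_eq_single ((n-1-d 0) + (n-1-d 1))]
    · rw [if_pos ⟨hd.1, hd.2, rfl⟩]
      simp only [smul_eq_mul]
      ring
    · intro b _ hne
      rw [if_neg (fun h => hne h.2.2.symm), mul_zero]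
    · intro hnm
      exfalso
      apply hnm
      rw [Finset.mem_range]
      omega
  · rw [if_neg hd]
    rw [Finset.sum_eq_zero, smul_zero]
    intro b _
    rw [if_neg (fun h => hd ⟨h.1, h.2.1⟩), mul_zero]


/-- B_{2m}/(2m) -/
noncomputable def Aq (m : ℕ) : ℚ := bernoulli (2*m) / ((2*m : ℕ) : ℚ)

noncomputable def EE (n w : ℕ) : ℚ := Aq n * (Aq w + Aq (n-w)) - Aq w * Aq (n-w)

lemma EE_symm (n w : ℕ) (hw : w ≤ n) : EE n (n-w) = EE n w := by
  have h : n - (n-w) = w := by omega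
  rw [EE, EE, h]
  ring

lemma beta_odd (k : ℕ) (hk : 1 ≤ k) : beta (2*k-1) = - Aq k := by
  rw [beta, Aq]
  have h1 : 2*k-1+1 = 2*k := by omega
  rw [h1]
  have h2 : (-1:ℚ)^(2*k-1) = -1 := Odd.neg_one_pow ⟨k-1, by omega⟩
  rw [h2]
  have h3 : ((2*k-1 : ℕ) : ℚ) + 1 = ((2*k : ℕ) : ℚ) := by
    have := congrArg (fun m : ℕ => (m : ℚ)) h1
    push_cast at this ⊢
    linarith
  rw [h3]
  ring

lemma beta_even_zero (r : ℕ) (hr : 2 ≤ r) (he : Even r) : beta r = 0 := by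
  rw [beta, bernoulli_eq_bernoulli'_of_ne_one (by omega),
    bernoulli'_eq_zero_of_odd (Even.add_one he) (by omega)]
  ring

lemma xi_even (n r : ℕ) (hn : 3 ≤ n) (he : Even r) (hle : r ≤ 2*n-2) : xi n r = 0 := by
  rw [xi]
  by_cases h0 : r = 0 ∨ r = 2*n-2
  · rw [if_pos h0]
  · rw [if_neg h0]
    push_neg at h0
    have hr2 : 2 ≤ r := by
      rcases he with ⟨t, ht⟩
      omega
    have he2 : Even (2*n-2-r) := by
      rw [Nat.even_iff] at he ⊢
      omega
    have hr2' : 2 ≤ 2*n-2-r := by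
      rcases he with ⟨t, ht⟩
      omega
    rw [beta_even_zero r hr2 he, beta_even_zero _ hr2' he2]
    rw [if_neg (by omega), if_neg (by omega)]
    ring

lemma xi_odd (n k : ℕ) (hn : 3 ≤ n) (hk1 : 1 ≤ k) (hk2 : k ≤ n-1) :
    xi n (2*k-1) = EE n k
      - Aq n * ((if k = 1 then 1 else 0) + (if k = n-1 then 1 else 0)) / (2*(n : ℚ) - 2) := by
  rw [xi]
  rw [if_neg (by omega)]
  have hr2 : 2*n-2-(2*k-1) = 2*(n-k)-1 := by omega
  rw [hr2]
  rw [show (2*n-1) = 2*n-1 from rfl]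
  rw [beta_odd k hk1, beta_odd (n-k) (by omega), beta_odd n (by omega)]
  have e1 : (if 2*k-1 = 1 then (1:ℚ) else 0) = (if k = 1 then 1 else 0) := by
    by_cases h : k = 1
    · rw [if_pos (by omega), if_pos h]
    · rw [if_neg (by omega), if_neg h]
  have e2 : (if 2*(n-k)-1 = 1 then (1:ℚ) else 0) = (if k = n-1 then 1 else 0) := by
    by_cases h : k = n-1
    · rw [if_pos (by omega), if_pos h]
    · rw [if_neg (by omega), if_neg h]
  rw [e1, e2, EE]
  ring

lemma den_one_iff_exists (x : ℚ) : x.den = 1 ↔ ∃ z : ℤ, x = z := by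
  constructor
  · intro h
    exact ⟨x.num, ((Rat.den_eq_one_iff x).1 h).symm⟩
  · rintro ⟨z, rfl⟩
    exact Rat.den_intCast z

lemma bridge (n w : ℕ) (hw : w ≤ n) :
    ((bernoulli (2*n) / (2*n)) * (bernoulli (2*w) / (2*w) + bernoulli (2*n-2*w) / (2*n-2*w))
      - (bernoulli (2*w) / (2*w)) * (bernoulli (2*n-2*w) / (2*n-2*w)) : ℚ) = EE n w := by
  rw [EE, Aq, Aq, Aq]
  have h1 : 2*n-2*w = 2*(n-w) := by omega
  rw [h1]
  have e1 : ((2*n : ℕ) : ℚ) = 2*(n:ℚ) := by push_cast; ring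
  have e2 : ((2*w : ℕ) : ℚ) = 2*(w:ℚ) := by push_cast; ring
  have e3 : ((2*(n-w) : ℕ) : ℚ) = 2*(n:ℚ) - 2*(w:ℚ) := by
    push_cast [Nat.cast_sub hw]
    ring
  rw [e1, e2, e3]

/-- G_n ∈ ℤ[x₁,x₂] is equivalent to an explicit integrality condition on
Bernoulli number expressions. -/
theorem G_integer_iff (n : ℕ) (hn : 3 ≤ n) :
    (∀ d : Fin 2 →₀ ℕ, ((Gpoly n).coeff d).den = 1)
      ↔ (∀ u v w : ℕ, 1 ≤ w → 2*w ≤ n → u + v = 2*w - 1 →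
          ∃ z : ℤ,
            (jden n : ℚ) * ((n-1).choose u : ℚ) * ((n-1).choose v : ℚ)
                * ((bernoulli (2*n) / (2*n))
                      * (bernoulli (2*w) / (2*w) + bernoulli (2*n-2*w) / (2*n-2*w))
                    - (bernoulli (2*w) / (2*w)) * (bernoulli (2*n-2*w) / (2*n-2*w)))
              + (if w = 1 then 1 else 0) / 2 = (z : ℚ)) := by
  have h2n2 : (2*(n:ℚ) - 2) ≠ 0 := by
    have h3 : (3:ℚ) ≤ (n:ℚ) := by exact_mod_cast hn
    intro h
    linarith
  obtain ⟨m, hm⟩ := num_odd n (by omega)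
  have hNq : (jden n : ℚ) * Aq n = 2*(m:ℚ)+1 := by
    have hAqn : Aq n = (bernoulli (2*n) / (2*n) : ℚ) := by
      rw [Aq]
      push_cast
      ring
    rw [hAqn, jden]
    set q : ℚ := bernoulli (2*n) / (2*n) with hqdef
    have hd : (q.den : ℚ) ≠ 0 := Nat.cast_ne_zero.2 q.den_nz
    have h1 : (q.den : ℚ) * q = (q.num : ℚ) := by
      exact Rat.den_mul_eq_num q
    rw [h1, hm]
    push_cast
    ring
  constructor
  · -- forward
    intro hL u v w hw1 hw2 huv
    have hu : u ≤ n-1 := by omega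
    have hv : v ≤ n-1 := by omega
    set d : Fin 2 →₀ ℕ := Finsupp.single 0 u + Finsupp.single 1 v with hd
    have hd0 : d 0 = u := by simp [hd, Finsupp.single_apply]
    have hd1 : d 1 = v := by simp [hd, Finsupp.single_apply]
    have hc := hL d
    rw [Gpoly_coeff n hn d, hd0, hd1, if_pos ⟨hu, hv⟩] at hc
    set k := n - w with hk
    have hr0 : (n-1-u)+(n-1-v) = 2*k-1 := by omega
    rw [hr0, xi_odd n k hn (by omega) (by omega)] at hc
    have hEk : EE n k = EE n w := by
      rw [hk]
      exact EE_symm n w (by omega)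
    have hpow : (-1:ℚ)^(u+v) = -1 := Odd.neg_one_pow ⟨w-1, by omega⟩
    rw [hEk, hpow, if_neg (show k ≠ 1 by omega)] at hc
    obtain ⟨z0, hz0⟩ := (den_one_iff_exists _).1 hc
    rw [bridge n w (by omega)]
    by_cases hw : w = 1
    · subst hw
      rw [if_pos (show k = n-1 by omega)] at hz0
      have huv' : (u = 0 ∧ v = 1) ∨ (u = 1 ∧ v = 0) := by omega
      refine ⟨-z0 + (m+1), ?_⟩
      rw [if_pos rfl]
      push_cast
      rcases huv' with ⟨rfl, rfl⟩ | ⟨rfl, rfl⟩ <;>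
      · simp only [Nat.choose_zero_right, Nat.choose_one_right] at hz0 ⊢
        push_cast [Nat.cast_sub (show 1 ≤ n by omega)] at hz0 ⊢
        have hhalf : ((n:ℚ) - 1) / (2*(n:ℚ)-2) = 1/2 := by
          rw [div_eq_iff h2n2]
          ring
        linear_combination -hz0 + (((n:ℚ)-1)/(2*(n:ℚ)-2))*hNq + (2*(m:ℚ)+1)*hhalf
    · rw [if_neg (show k ≠ n-1 by omega)] at hz0
      refine ⟨-z0, ?_⟩
      rw [if_neg hw]
      push_cast
      linear_combination -hz0
  · -- backward
    intro hR d
    rw [Gpoly_coeff n hn d]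
    by_cases hd : d 0 ≤ n-1 ∧ d 1 ≤ n-1
    swap
    · rw [if_neg hd]
      rfl
    rw [if_pos hd]
    obtain ⟨hd0, hd1⟩ := hd
    set i := d 0 with hi
    set j := d 1 with hj
    set r0 := (n-1-i)+(n-1-j) with hr0
    rcases Nat.even_or_odd r0 with he | ho
    · rw [xi_even n r0 hn he (by omega)]
      norm_num
    · obtain ⟨k', hk'⟩ := ho
      set k := k'+1 with hkk
      have hrk : r0 = 2*k-1 := by omega
      have hk1 : 1 ≤ k := by omega
      have hk2 : k ≤ n-1 := by omega
      rw [hrk, xi_odd n k hn hk1 hk2]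
      have hpow : (-1:ℚ)^(i+j) = -1 := Odd.neg_one_pow ⟨n-k-1, by omega⟩
      rw [hpow]
      rw [den_one_iff_exists]
      by_cases h2k : 2*k ≤ n
      · -- use RHS at w := k, u := n-1-i, v := n-1-j
        obtain ⟨z0, hz0⟩ := hR (n-1-i) (n-1-j) k hk1 h2k (by omega)
        rw [bridge n k (by omega), Nat.choose_symm hd0, Nat.choose_symm hd1] at hz0
        rw [if_neg (show k ≠ n-1 by omega)]
        by_cases hk1' : k = 1
        · rw [if_pos hk1'] at hz0
          rw [if_pos hk1']
          have hij : (n-1-i = 0 ∧ n-1-j = 1) ∨ (n-1-i = 1 ∧ n-1-j = 0) := by omega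
          have hCC : ((n-1).choose i : ℚ) * ((n-1).choose j : ℚ) = (n:ℚ)-1 := by
            have hch : (n-1).choose (n-2) = n-1 := by
              rw [show n-2 = (n-1) - 1 by omega, Nat.choose_symm (by omega), Nat.choose_one_right]
            rcases hij with ⟨h1, h2⟩ | ⟨h1, h2⟩
            · rw [show i = n-1 by omega, show j = n-2 by omega, Nat.choose_self, hch]
              push_cast [Nat.cast_sub (show 1 ≤ n by omega)]
              ring
            · rw [show i = n-2 by omega, show j = n-1 by omega, Nat.choose_self, hch]
              push_cast [Nat.cast_sub (show 1 ≤ n by omega)]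
              ring
          have hhalf : ((n:ℚ) - 1) / (2*(n:ℚ)-2) = 1/2 := by
            rw [div_eq_iff h2n2]
            ring
          refine ⟨-z0 + (m+1), ?_⟩
          push_cast
          linear_combination (-1)*hz0 + ((jden n : ℚ)*(Aq n)/(2*(n:ℚ)-2))*hCC
            + (((n:ℚ)-1)/(2*(n:ℚ)-2))*hNq + (2*(m:ℚ)+1)*hhalf
        · rw [if_neg hk1'] at hz0
          rw [if_neg hk1']
          refine ⟨-z0, ?_⟩
          push_cast
          linear_combination -hz0
      · -- use RHS at w := n-k, u := i, v := j
        obtain ⟨z0, hz0⟩ := hR i j (n-k) (by omega) (by omega) (by omega)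
        rw [bridge n (n-k) (by omega)] at hz0
        have hEk : EE n (n-k) = EE n k := by
          have h := EE_symm n (n-k) (by omega)
          rw [show n - (n-k) = k by omega] at h
          exact h.symm
        rw [hEk] at hz0
        rw [if_neg (show k ≠ 1 by omega)]
        by_cases hkn : k = n-1
        · rw [if_pos hkn]
          rw [if_pos (show n-k = 1 by omega)] at hz0
          have hij : (i = 0 ∧ j = 1) ∨ (i = 1 ∧ j = 0) := by omega
          have hCC : ((n-1).choose i : ℚ) * ((n-1).choose j : ℚ) = (n:ℚ)-1 := by
            rcases hij with ⟨h1, h2⟩ | ⟨h1, h2⟩ <;>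
              rw [h1, h2] <;>
              simp [Nat.choose_one_right] <;>
              push_cast [Nat.cast_sub (show 1 ≤ n by omega)] <;>
              ring
          have hhalf : ((n:ℚ) - 1) / (2*(n:ℚ)-2) = 1/2 := by
            rw [div_eq_iff h2n2]
            ring
          refine ⟨-z0 + (m+1), ?_⟩
          push_cast
          linear_combination (-1)*hz0 + ((jden n : ℚ)*(Aq n)/(2*(n:ℚ)-2))*hCC
            + (((n:ℚ)-1)/(2*(n:ℚ)-2))*hNq + (2*(m:ℚ)+1)*hhalf
        · rw [if_neg hkn]
          rw [if_neg (show n-k ≠ 1 by omega)] at hz0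
          refine ⟨-z0, ?_⟩
          push_cast
          linear_combination -hz0
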